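/- The score function of the joint observation-action sequence under a parameterized observation-based policy is independent of the initial state: ∇_θ log P_θ(y | S_0 = s_0) = ∇_θ log P_θ(y) = ∑_{t=0..T} ∇_θ log π_θ(a_t | o_{0:t-1}), for y = (o_{0:T}, a_{0:T}) with P_θ(y | s_0) > 0 and P_θ(y) > 0. -/

import Mathlib

open BigOperators Finset Matrix

/-- A hidden Markov model with controllable emissions. `step s s'` is the probability
of transitioning from state `s` to state `s'`, `emit s a o` is the probability of
emitting observation `o` in state `s` under perception action `a`, and `init` is the
distribution of the initial state `S₀`. -/
structure CHMM (S O A : Type*) [Fintype S] [Fintype O] [Fintype A] where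
  step : S → S → ℝ
  emit : S → A → O → ℝ
  init : S → ℝ
  step_nonneg : ∀ s s', 0 ≤ step s s'
  step_sum : ∀ s, ∑ s', step s s' = 1
  emit_nonneg : ∀ s a o, 0 ≤ emit s a o
  emit_sum : ∀ s a, ∑ o, emit s a o = 1
  init_nonneg : ∀ s, 0 ≤ init s
  init_sum : ∑ s, init s = 1

variable {S O A : Type*} [Fintype S] [Fintype O] [Fintype A]

/-- The weight of a state path `s₀ … s_{t+1}`: at each time `i ≤ t` the state `sᵢ`
emits `oᵢ` under action `aᵢ` and then transitions to `s_{i+1}`. -/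
noncomputable def pathWeight (M : CHMM S O A) (t : ℕ) (o : Fin (t+1) → O)
    (a : Fin (t+1) → A) (s : Fin (t+2) → S) : ℝ :=
  ∏ i : Fin (t+1), (M.emit (s i.castSucc) (a i) (o i) * M.step (s i.castSucc) (s i.succ))

/-- `P(o_{0:t} | a_{0:t})` when the initial state is drawn from `μ`. -/
noncomputable def obsProbFrom (M : CHMM S O A) (μ : S → ℝ) (t : ℕ)
    (o : Fin (t+1) → O) (a : Fin (t+1) → A) : ℝ :=
  ∑ s : Fin (t+2) → S, μ (s 0) * pathWeight M t o a s

/-- `P(o_{0:t} | a_{0:t})`, the action-conditioned observation-sequence probability. -/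
noncomputable def obsProb (M : CHMM S O A) (t : ℕ)
    (o : Fin (t+1) → O) (a : Fin (t+1) → A) : ℝ :=
  obsProbFrom M M.init t o a

/-- Joint probability `P_π(o_{0:t}, a_{0:t})` of the observation-action sequence in the
process induced by an observation-based policy `π` (mapping observation histories to
action probabilities), when the initial state is drawn from `μ`. -/
noncomputable def jointProbFrom (M : CHMM S O A) (μ : S → ℝ) (π : List O → A → ℝ)
    (t : ℕ) (o : Fin (t+1) → O) (a : Fin (t+1) → A) : ℝ :=
  ∑ s : Fin (t+2) → S, μ (s 0) *
    ∏ i : Fin (t+1), (π ((List.ofFn o).take i) (a i) *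
      M.emit (s i.castSucc) (a i) (o i) * M.step (s i.castSucc) (s i.succ))

/-- Joint probability `P_π(o_{0:t}, a_{0:t})` in the induced process. -/
noncomputable def jointProb (M : CHMM S O A) (π : List O → A → ℝ)
    (t : ℕ) (o : Fin (t+1) → O) (a : Fin (t+1) → A) : ℝ :=
  jointProbFrom M M.init π t o a

/-- The observable operator `A_{o|a}`, with `(i,j)` entry `T_{i,j} · E(o | j, a)` where
`T_{i,j} = P(X_{t+1} = i | X_t = j)`. -/
noncomputable def obsOp (M : CHMM S O A) (o : O) (a : A) : Matrix S S ℝ :=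
  fun i j => M.step j i * M.emit j a o

/-- The product `A_{o_t|a_t} ⋯ A_{o_0|a_0}` of observable operators. -/
noncomputable def obsOpProd [DecidableEq S] (M : CHMM S O A) (t : ℕ)
    (o : Fin (t+1) → O) (a : Fin (t+1) → A) : Matrix S S ℝ :=
  (List.ofFn (fun i : Fin (t+1) => obsOp M (o i) (a i))).reverse.prod


/-- Proposition 4: the score function of the joint observation-action
sequence `y = (o_{0:T}, a_{0:T})` under a differentiable positive parameterized
observation-based policy `π_θ` is independent of the initial state:
`∇_θ log P_θ(y | S₀ = s₀) = ∇_θ log P_θ(y) = ∑_{t=0}^T ∇_θ log π_θ(a_t | o_{0:t-1})`. -/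
theorem score_indep_initial_state [DecidableEq S] {d : ℕ} (M : CHMM S O A)
    (π : EuclideanSpace ℝ (Fin d) → List O → A → ℝ)
    (hdiff : ∀ h a', Differentiable ℝ (fun θ => π θ h a'))
    (hpos : ∀ θ h a', 0 < π θ h a')
    (T : ℕ) (o : Fin (T+1) → O) (a : Fin (T+1) → A) (s₀ : S)
    (θ₀ : EuclideanSpace ℝ (Fin d))
    (h1 : 0 < jointProbFrom M (Pi.single s₀ 1) (π θ₀) T o a)
    (h2 : 0 < jointProb M (π θ₀) T o a) :
    fderiv ℝ (fun θ => Real.log (jointProbFrom M (Pi.single s₀ 1) (π θ) T o a)) θ₀ =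
        fderiv ℝ (fun θ => Real.log (jointProb M (π θ) T o a)) θ₀ ∧
      fderiv ℝ (fun θ => Real.log (jointProb M (π θ) T o a)) θ₀ =
        ∑ t : Fin (T+1),
          fderiv ℝ (fun θ => Real.log (π θ ((List.ofFn o).take t) (a t))) θ₀ := by
  have factor : ∀ (μ : S → ℝ) (p : List O → A → ℝ),
      jointProbFrom M μ p T o a =
        (∏ i : Fin (T+1), p ((List.ofFn o).take i) (a i)) * obsProbFrom M μ T o a := by
    intro μ p
    unfold jointProbFrom obsProbFrom pathWeight
    rw [Finset.mul_sum]
    refine Finset.sum_congr rfl fun s _ => ?_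
    rw [show (∏ i : Fin (T+1), (p ((List.ofFn o).take i) (a i) *
        M.emit (s i.castSucc) (a i) (o i) * M.step (s i.castSucc) (s i.succ))) =
        ∏ i : Fin (T+1), (p ((List.ofFn o).take i) (a i) *
        (M.emit (s i.castSucc) (a i) (o i) * M.step (s i.castSucc) (s i.succ)))
      from Finset.prod_congr rfl fun i _ => by ring,
      Finset.prod_mul_distrib]
    ring
  have hPpos : ∀ θ, 0 < ∏ i : Fin (T+1), π θ ((List.ofFn o).take i) (a i) :=
    fun θ => Finset.prod_pos fun i _ => hpos θ _ _
  have hc1 : 0 < obsProbFrom M (Pi.single s₀ 1) T o a := by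
    rw [factor _ (π θ₀)] at h1
    by_contra h
    push_neg at h
    nlinarith [hPpos θ₀]
  have hc2 : 0 < obsProbFrom M M.init T o a := by
    unfold jointProb at h2
    rw [factor _ (π θ₀)] at h2
    by_contra h
    push_neg at h
    nlinarith [hPpos θ₀]
  have key : ∀ (μ : S → ℝ), 0 < obsProbFrom M μ T o a →
      fderiv ℝ (fun θ => Real.log (jointProbFrom M μ (π θ) T o a)) θ₀ =
        ∑ t : Fin (T+1),
          fderiv ℝ (fun θ => Real.log (π θ ((List.ofFn o).take t) (a t))) θ₀ := by
    intro μ hc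
    have heq : (fun θ => Real.log (jointProbFrom M μ (π θ) T o a)) =
        fun θ => (∑ i : Fin (T+1), Real.log (π θ ((List.ofFn o).take i) (a i))) +
          Real.log (obsProbFrom M μ T o a) := by
      funext θ
      rw [factor _ (π θ), Real.log_mul (hPpos θ).ne' hc.ne',
        Real.log_prod fun i _ => (hpos θ _ _).ne']
    rw [heq, fderiv_add_const]
    exact fderiv_fun_sum fun i _ => ((hdiff _ _) θ₀).log (hpos θ₀ _ _).ne'
  have e2 : fderiv ℝ (fun θ => Real.log (jointProb M (π θ) T o a)) θ₀ =
      ∑ t : Fin (T+1),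
        fderiv ℝ (fun θ => Real.log (π θ ((List.ofFn o).take t) (a t))) θ₀ := by
    unfold jointProb
    exact key _ hc2
  exact ⟨by rw [key _ hc1, e2], e2⟩
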